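/- Subgradient inequality from monotonicity. Let a, b ∈ X with a ≠ b, and let f : X → ℝ̄ be proper and continuous relative to the segment [a, b] with [a, b] ⊆ dom f, locally Lipschitz relative to [a, b] around every point of [a, b], and such that the relative limiting subdifferential map x ↦ ∂_{[a,b]}f(x) is monotone. Then for every u ∈ [a, b] and every u* ∈ ∂_{[a,b]}f(u), one has ⟨u*, x − u⟩ ≤ f(x) − f(u) for all x ∈ [a, b]; consequently f is convex on [a, b]. -/

import Mathlib

open Filter Topology Set

noncomputable section

/-- A normed space is locally uniformly convex. -/
def LocUnifConvex (E : Type*) [NormedAddCommGroup E] : Prop :=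
  ∀ x : E, ‖x‖ = 1 → ∀ ε : ℝ, 0 < ε →
    ∃ δ : ℝ, 0 < δ ∧ ∀ y : E, ‖y‖ = 1 → 2 - δ < ‖x + y‖ → ‖x - y‖ < ε

/-- Standing assumptions of the paper: `X` is reflexive, both `X` and its dual `X*` are
locally uniformly convex, and the norm of `X` is Fréchet differentiable at every
nonzero point. -/
def StandingAssumptions (X : Type*) [NormedAddCommGroup X] [NormedSpace ℝ X] : Prop :=
  Function.Surjective (⇑(NormedSpace.inclusionInDoubleDual ℝ X)) ∧
  LocUnifConvex X ∧ LocUnifConvex (X →L[ℝ] ℝ) ∧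
  ∀ x : X, x ≠ 0 → DifferentiableAt ℝ (fun y : X => ‖y‖) x

variable {X : Type*}

open scoped Classical in
/-- The restriction `f_Ω` of `f` to `Ω` (equal to `+∞` off `Ω`). -/
def restr (f : X → EReal) (Ω : Set X) : X → EReal := fun x => if x ∈ Ω then f x else ⊤

/-- The epigraph of an extended-real-valued function, as a subset of `X × ℝ`. -/
def epiSet (g : X → EReal) : Set (X × ℝ) := {p | g p.1 ≤ (p.2 : EReal)}

/-- The paper's addition on `ℝ̄ = ℝ ∪ {±∞}`, with the convention `∞ - ∞ = ∞`
(i.e. `⊤` dominates). -/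
def pAdd (a b : EReal) : EReal := if a = ⊤ ∨ b = ⊤ then ⊤ else a + b

section NormedX
variable [NormedAddCommGroup X] [NormedSpace ℝ X]

/-- The `ε`-normal set to `S ⊆ X` at `xb`. -/
def eNormal (ε : ℝ) (xb : X) (S : Set X) : Set (X →L[ℝ] ℝ) :=
  {xs | Filter.limsup (fun x => ((xs (x - xb) / ‖x - xb‖ : ℝ) : EReal))
      (nhdsWithin xb S) ≤ (ε : EReal)}

/-- The `ε`-normal set to `S ⊆ X × ℝ` at `zb`, where `X × ℝ` carries the norm
`‖(x, r)‖ = ‖x‖ + |r|` and the dual pairing is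
`⟨(x*, r*), (x, r)⟩ = ⟨x*, x⟩ + r* r`. -/
def eNormalProd (ε : ℝ) (zb : X × ℝ) (S : Set (X × ℝ)) : Set ((X →L[ℝ] ℝ) × ℝ) :=
  {zs | Filter.limsup
      (fun z => (((zs.1 (z.1 - zb.1) + zs.2 * (z.2 - zb.2)) /
        (‖z.1 - zb.1‖ + |z.2 - zb.2|) : ℝ) : EReal)) (nhdsWithin zb S) ≤ (ε : EReal)}

/-- The tangent cone to `Ω` at `xb`. -/
def tanCone (Ω : Set X) (xb : X) : Set X :=
  {v | ∃ (t : ℕ → ℝ) (w : ℕ → X), (∀ k, 0 < t k) ∧ Tendsto t atTop (nhds 0) ∧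
    Tendsto w atTop (nhds v) ∧ ∀ k, xb + t k • w k ∈ Ω}

/-- The duality mapping `J(x) = {x* : ⟨x*, x⟩ = ‖x‖² = ‖x*‖²}`. -/
def dualityMap (x : X) : Set (X →L[ℝ] ℝ) := {xs | xs x = ‖x‖ ^ 2 ∧ xs x = ‖xs‖ ^ 2}

/-- `J(A) = ⋃ x ∈ A, J(x)`. -/
def dualityMapSet (A : Set X) : Set (X →L[ℝ] ℝ) := ⋃ x ∈ A, dualityMap x

/-- The geometric `ε`-subdifferential `∂̂_ε g(xb)` (empty unless `g(xb)` is finite). -/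
def geomSub (ε : ℝ) (g : X → EReal) (xb : X) : Set (X →L[ℝ] ℝ) :=
  {xs | ∃ r : ℝ, g xb = (r : EReal) ∧ (xs, (-1 : ℝ)) ∈ eNormalProd ε (xb, r) (epiSet g)}

/-- The `ε`-regular subdifferential of `f` relative to `Ω` at `xb`:
`∂̂^ε_Ω f(xb) = ∂̂_ε f_Ω(xb) ∩ J(T(xb, Ω))`. -/
def relRegSub (ε : ℝ) (Ω : Set X) (f : X → EReal) (xb : X) : Set (X →L[ℝ] ℝ) :=
  geomSub ε (restr f Ω) xb ∩ dualityMapSet (tanCone Ω xb)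

/-- Weak* convergence of a sequence of functionals. -/
def WeakStarTendsto (u : ℕ → X →L[ℝ] ℝ) (l : X →L[ℝ] ℝ) : Prop :=
  ∀ v : X, Tendsto (fun k => u k v) atTop (nhds (l v))

/-- The limiting subdifferential of `f` relative to `Ω` at `xb`. -/
def relLimSub (Ω : Set X) (f : X → EReal) (xb : X) : Set (X →L[ℝ] ℝ) :=
  {xs | ∃ (ε : ℕ → ℝ) (x : ℕ → X) (u : ℕ → X →L[ℝ] ℝ),
    (∀ k, 0 < ε k) ∧ Antitone ε ∧ Tendsto ε atTop (nhds 0) ∧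
    (∀ k, x k ∈ Ω) ∧ Tendsto x atTop (nhds xb) ∧
    Tendsto (fun k => f (x k)) atTop (nhds (f xb)) ∧
    (∀ k, u k ∈ relRegSub (ε k) Ω f (x k)) ∧ WeakStarTendsto u xs}

/-- The (Mordukhovich) limiting subdifferential of `g` at `xb`. -/
def limSub (g : X → EReal) (xb : X) : Set (X →L[ℝ] ℝ) :=
  {xs | ∃ (ε : ℕ → ℝ) (x : ℕ → X) (u : ℕ → X →L[ℝ] ℝ),
    (∀ k, 0 < ε k) ∧ Antitone ε ∧ Tendsto ε atTop (nhds 0) ∧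
    Tendsto x atTop (nhds xb) ∧ Tendsto (fun k => g (x k)) atTop (nhds (g xb)) ∧
    (∀ k, u k ∈ geomSub (ε k) g (x k)) ∧ WeakStarTendsto u xs}

/-- `f` is lower semicontinuous relative to `Ω` at `xb`. -/
def LscRelAt (f : X → EReal) (Ω : Set X) (xb : X) : Prop :=
  f xb ≤ Filter.liminf f (nhdsWithin xb Ω)

/-- `f` is lower semicontinuous relative to `Ω` (at every point of `Ω ∩ dom f`). -/
def LscRelOn (f : X → EReal) (Ω : Set X) : Prop :=
  ∀ x ∈ Ω, f x ≠ ⊤ → LscRelAt f Ω x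

/-- `f` is lower semicontinuous relative to `Ω` around `xb`. -/
def LscRelAround (f : X → EReal) (Ω : Set X) (xb : X) : Prop :=
  ∃ U ∈ 𝓝 xb, ∀ x ∈ U ∩ Ω, f x ≠ ⊤ → LscRelAt f Ω x

/-- `f` is locally Lipschitz relative to `Ω` around `xb` with modulus `ℓ`. -/
def LocLipRel (f : X → EReal) (Ω : Set X) (xb : X) (ℓ : ℝ) : Prop :=
  ∃ U ∈ 𝓝 xb, (∀ x ∈ U ∩ Ω, ∃ r : ℝ, f x = (r : EReal)) ∧
    ∀ x ∈ U ∩ Ω, ∀ u ∈ U ∩ Ω, |(f x).toReal - (f u).toReal| ≤ ℓ * ‖x - u‖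

/-- A set is locally closed around a point. -/
def LocallyClosedAt {E : Type*} [MetricSpace E] (S : Set E) (p : E) : Prop :=
  ∃ r : ℝ, 0 < r ∧ IsClosed (S ∩ Metric.closedBall p r)

/-- `f` is (finite and) continuous relative to `Ω`. -/
def ContRelOn (f : X → EReal) (Ω : Set X) : Prop :=
  (∀ x ∈ Ω, ∃ r : ℝ, f x = (r : EReal)) ∧
  ∀ x ∈ Ω, Tendsto f (nhdsWithin x Ω) (nhds (f x))

/-- `f` is convex on the set `S`. -/
def ConvexOnSet (f : X → EReal) (S : Set X) : Prop :=
  ∀ x ∈ S, ∀ y ∈ S, ∀ t : ℝ, 0 ≤ t → t ≤ 1 →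
    f (t • x + (1 - t) • y) ≤ (t : EReal) * f x + ((1 - t : ℝ) : EReal) * f y

/-- Monotonicity of a set-valued map from `X` into `X*`. -/
def MonotoneSV (F : X → Set (X →L[ℝ] ℝ)) : Prop :=
  ∀ x u : X, ∀ xs us : X →L[ℝ] ℝ, xs ∈ F x → us ∈ F u → 0 ≤ (xs - us) (x - u)

end NormedX

end




lemma barrier_lemma {g : ℝ → ℝ} {p q c : ℝ} (hpq : p < q)
    (hg : ContinuousOn g (Icc p q)) (hlt : g q - g p < c * (q - p)) :
    ∃ t₀ ∈ Ioo p q, ∃ c'' < c, ∀ ε : ℝ, 0 < ε →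
      ∀ᶠ t in 𝓝 t₀, g t₀ + c'' * (t - t₀) - ε * |t - t₀| ≤ g t := by
  have hqp : (0:ℝ) < q - p := by linarith
  obtain ⟨c', hc'def⟩ : ∃ c' : ℝ, c' = ((g q - g p) / (q - p) + c) / 2 := ⟨_, rfl⟩
  have hs0 : (g q - g p) / (q - p) < c := (div_lt_iff₀ hqp).mpr (by linarith)
  have hc'c : c' < c := by rw [hc'def]; linarith
  have hincr : g q - g p < c' * (q - p) := by
    have h : (g q - g p) / (q - p) < c' := by rw [hc'def]; linarith
    calc g q - g p = (g q - g p) / (q - p) * (q - p) := by field_simp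
    _ < c' * (q - p) := mul_lt_mul_of_pos_right h hqp
  obtain ⟨φ, hφdef⟩ : ∃ φ : ℝ → ℝ, φ = fun t => g t - c' * t := ⟨_, rfl⟩
  have hφeval : ∀ t, φ t = g t - c' * t := fun t => by rw [hφdef]
  have hφc : ContinuousOn φ (Icc p q) := by
    rw [hφdef]; exact hg.sub ((continuous_const.mul continuous_id').continuousOn)
  have hφqp : φ q < φ p := by rw [hφeval, hφeval]; nlinarith
  -- find s₀ ∈ Ioo p q with φ s₀ < φ p
  have hnb : (𝓝[Ioo p q] q).NeBot := by
    rw [← mem_closure_iff_nhdsWithin_neBot, closure_Ioo hpq.ne]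
    exact right_mem_Icc.mpr hpq.le
  have htq : Filter.Tendsto φ (𝓝[Ioo p q] q) (𝓝 (φ q)) :=
    (hφc q (right_mem_Icc.mpr hpq.le)).mono_left (nhdsWithin_mono _ Ioo_subset_Icc_self)
  obtain ⟨s₀, hs₀lt, hs₀Ioo⟩ := ((htq.eventually_lt_const hφqp).and eventually_mem_nhdsWithin).exists
  have hps₀ : p < s₀ := hs₀Ioo.1
  have hs₀q : s₀ < q := hs₀Ioo.2
  -- barrier
  obtain ⟨θ, hθdef⟩ : ∃ θ : ℝ, θ = (φ p - φ s₀) * (q - s₀) / 2 := ⟨_, rfl⟩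
  have hθ : 0 < θ := by rw [hθdef]; apply div_pos (mul_pos (by linarith) (by linarith)) two_pos
  obtain ⟨ψ, hψdef⟩ : ∃ ψ : ℝ → ℝ, ψ = fun t => θ / (q - t) := ⟨_, rfl⟩
  have hψeval : ∀ t, ψ t = θ / (q - t) := fun t => by rw [hψdef]
  obtain ⟨Φ, hΦdef⟩ : ∃ Φ : ℝ → ℝ, Φ = fun t => φ t + ψ t := ⟨_, rfl⟩
  have hΦeval : ∀ t, Φ t = φ t + ψ t := fun t => by rw [hΦdef]
  have hψs₀ : ψ s₀ = (φ p - φ s₀) / 2 := by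
    have hne : q - s₀ ≠ 0 := by linarith
    rw [hψeval, hθdef]; field_simp
  have hΦs₀p : Φ s₀ < φ p := by rw [hΦeval, hψs₀]; linarith
  -- lower bound of φ on Icc p q
  obtain ⟨tm, htm, hmin⟩ := isCompact_Icc.exists_isMinOn (Set.nonempty_Icc.mpr hpq.le) hφc
  -- choose s₁
  obtain ⟨d, hddef⟩ : ∃ d : ℝ, d = θ / (|Φ s₀ - φ tm| + 1) := ⟨_, rfl⟩
  have hd : 0 < d := by rw [hddef]; positivity
  obtain ⟨s₁, hs₁def⟩ : ∃ s₁ : ℝ, s₁ = max s₀ (q - d / 2) := ⟨_, rfl⟩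
  have hs₁q : s₁ < q := by rw [hs₁def]; apply max_lt hs₀q; linarith
  have hs₀s₁ : s₀ ≤ s₁ := by rw [hs₁def]; exact le_max_left _ _
  have hps₁ : p ≤ s₁ := le_trans hps₀.le hs₀s₁
  have htail : ∀ t ∈ Ico s₁ q, Φ s₀ < Φ t := by
    intro t ht
    have htq' : 0 < q - t := by have := ht.2; linarith
    have hqt_le : q - t ≤ d / 2 := by
      have h1 : q - d / 2 ≤ s₁ := by rw [hs₁def]; exact le_max_right _ _
      have := ht.1; linarith
    have hbig : θ / (d / 2) ≤ θ / (q - t) := div_le_div_of_nonneg_left hθ.le htq' hqt_le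
    have h2 : θ / (d / 2) = 2 * (|Φ s₀ - φ tm| + 1) := by
      rw [hddef]; field_simp
    have hφt : φ tm ≤ φ t := hmin (mem_Icc.mpr ⟨le_trans hps₁ ht.1, ht.2.le⟩)
    have hM : Φ s₀ - φ tm ≤ |Φ s₀ - φ tm| := le_abs_self _
    have h3 : Φ t = φ t + ψ t := hΦeval t
    have h4 : ψ t = θ / (q - t) := hψeval t
    have habs : 0 ≤ |Φ s₀ - φ tm| := abs_nonneg _
    rw [h2] at hbig
    linarith
  -- minimize Φ on Icc p s₁
  have hψc : ContinuousOn ψ (Icc p s₁) := by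
    rw [hψdef]
    apply ContinuousOn.div continuousOn_const ((continuous_const.sub continuous_id').continuousOn)
    intro t ht
    have h1 : t < q := lt_of_le_of_lt ht.2 hs₁q
    exact ne_of_gt (by show (0:ℝ) < q - t; linarith)
  have hΦc : ContinuousOn Φ (Icc p s₁) := by
    rw [hΦdef]
    exact (hφc.mono (Icc_subset_Icc le_rfl hs₁q.le)).add hψc
  obtain ⟨t₀, ht₀mem, ht₀min⟩ :=
    isCompact_Icc.exists_isMinOn (Set.nonempty_Icc.mpr hps₁) hΦc
  -- t₀ is a global min of Φ on Ico p q
  have hglob : ∀ t ∈ Ico p q, Φ t₀ ≤ Φ t := by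
    intro t ht
    rcases le_or_gt t s₁ with h | h
    · exact ht₀min (mem_Icc.mpr ⟨ht.1, h⟩)
    · have h1 : Φ s₀ < Φ t := htail t (mem_Ico.mpr ⟨h.le, ht.2⟩)
      have h2 : Φ t₀ ≤ Φ s₀ := ht₀min (mem_Icc.mpr ⟨hps₀.le, hs₀s₁⟩)
      linarith
  have ht₀p : p < t₀ := by
    rcases lt_or_eq_of_le ht₀mem.1 with h | h
    · exact h
    · exfalso
      have h2 : Φ t₀ ≤ Φ s₀ := ht₀min (mem_Icc.mpr ⟨hps₀.le, hs₀s₁⟩)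
      have h3 : φ p < Φ p := by
        rw [hΦeval, hψeval]
        have : 0 < θ / (q - p) := div_pos hθ hqp
        linarith
      have h5 : Φ p = Φ t₀ := by rw [← h]
      linarith
  have ht₀q : t₀ < q := lt_of_le_of_lt ht₀mem.2 hs₁q
  -- the slope
  obtain ⟨c'', hc''def⟩ : ∃ c'' : ℝ, c'' = c' - θ / (q - t₀) ^ 2 := ⟨_, rfl⟩
  have hc''c : c'' < c := by
    rw [hc''def]
    have : 0 < θ / (q - t₀) ^ 2 := div_pos hθ (pow_pos (by linarith) 2)
    linarith
  refine ⟨t₀, ⟨ht₀p, ht₀q⟩, c'', hc''c, ?_⟩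
  intro ε hε
  -- ψ has derivative θ/(q-t₀)^2 at t₀
  have hder : HasDerivAt ψ (θ / (q - t₀) ^ 2) t₀ := by
    have h1 : HasDerivAt (fun t : ℝ => q - t) (-1) t₀ := by
      simpa using (hasDerivAt_id t₀).const_sub q
    have hne : q - t₀ ≠ 0 := by linarith
    have h2 := h1.inv hne
    have h3 := h2.const_mul θ
    have h4 : HasDerivAt (fun t : ℝ => θ * (q - t)⁻¹) (θ / (q - t₀) ^ 2) t₀ := by
      refine h3.congr_deriv ?_
      ring
    rw [hψdef]
    simpa [div_eq_mul_inv] using h4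
  have hlo := (hasDerivAt_iff_isLittleO.mp hder).def hε
  have hev2 : Ioo p q ∈ 𝓝 t₀ := Ioo_mem_nhds ht₀p ht₀q
  filter_upwards [hlo, hev2] with t hlt' hIoo
  have hmin' : Φ t₀ ≤ Φ t := hglob t (mem_Ico.mpr ⟨hIoo.1.le, hIoo.2⟩)
  have hub : ψ t - ψ t₀ - (t - t₀) * (θ / (q - t₀) ^ 2) ≤ ε * |t - t₀| := by
    have := hlt'
    rw [Real.norm_eq_abs, Real.norm_eq_abs] at this
    calc ψ t - ψ t₀ - (t - t₀) * (θ / (q - t₀) ^ 2)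
        ≤ |ψ t - ψ t₀ - (t - t₀) * (θ / (q - t₀) ^ 2)| := le_abs_self _
    _ ≤ ε * |t - t₀| := by simpa [smul_eq_mul] using this
  have e1 : Φ t = φ t + ψ t := hΦeval t
  have e2 : Φ t₀ = φ t₀ + ψ t₀ := hΦeval t₀
  have e3 : φ t = g t - c' * t := hφeval t
  have e4 : φ t₀ = g t₀ - c' * t₀ := hφeval t₀
  rw [hc''def]
  nlinarith [hub, hmin']


lemma barrier_lemma' {g : ℝ → ℝ} {p q c : ℝ} (hpq : p < q)
    (hg : ContinuousOn g (Icc p q)) (hgt : c * (q - p) < g q - g p) :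
    ∃ t₀ ∈ Ioo p q, ∃ c'', c < c'' ∧ ∀ ε : ℝ, 0 < ε →
      ∀ᶠ t in 𝓝 t₀, g t₀ + c'' * (t - t₀) - ε * |t - t₀| ≤ g t := by
  have hr : ContinuousOn (fun t => g (p + q - t)) (Icc p q) := by
    apply hg.comp ((continuous_const.sub continuous_id').continuousOn)
    intro t ht
    exact ⟨by simpa using sub_le_sub_left ht.2 (p+q), by simp; linarith [ht.1]⟩
  have hlt : (fun t => g (p + q - t)) q - (fun t => g (p + q - t)) p < (-c) * (q - p) := by
    simp only []
    have e1 : p + q - q = p := by ring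
    have e2 : p + q - p = q := by ring
    rw [e1, e2]; linarith
  obtain ⟨th, hth, ch, hch, hev⟩ := barrier_lemma hpq hr hlt
  refine ⟨p + q - th, ⟨by linarith [hth.2], by linarith [hth.1]⟩, -ch, by linarith, ?_⟩
  intro ε hε
  have hcont : Tendsto (fun s : ℝ => p + q - s) (𝓝 (p + q - th)) (𝓝 th) := by
    have : Tendsto (fun s : ℝ => p + q - s) (𝓝 (p + q - th)) (𝓝 (p + q - (p + q - th))) :=
      (continuous_const.sub continuous_id').tendsto _
    simpa using this
  filter_upwards [hcont.eventually (hev ε hε)] with s hs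
  have e3 : p + q - (p + q - s) = s := by ring
  rw [e3] at hs
  have e4 : (p + q - s) - th = -(s - (p + q - th)) := by ring
  rw [e4, abs_neg] at hs
  calc g (p + q - th) + (-ch) * (s - (p + q - th)) - ε * |s - (p + q - th)|
      = g (p + q - th) + ch * (-(s - (p + q - th))) - ε * |s - (p + q - th)| := by ring
  _ ≤ g s := hs

section LemA
variable {X : Type*} [NormedAddCommGroup X] [NormedSpace ℝ X]

lemma mem_relRegSub_of_localSubgrad
    (a b : X) (hab : a ≠ b) (f : X → EReal)
    (hfin : ∀ t ∈ Icc (0:ℝ) 1, f (a + t • (b - a)) = (((f (a + t • (b - a))).toReal : ℝ) : EReal))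
    (j : X →L[ℝ] ℝ) (hje : j (b - a) = ‖b - a‖ ^ 2) (hjn : ‖j‖ = ‖b - a‖)
    (t₀ : ℝ) (ht₀ : t₀ ∈ Ioo (0:ℝ) 1) (c : ℝ)
    (H : ∀ ε : ℝ, 0 < ε → ∀ᶠ t in 𝓝 t₀, t ∈ Icc (0:ℝ) 1 →
      (f (a + t₀ • (b - a))).toReal + c * (t - t₀) - ε * |t - t₀| ≤ (f (a + t • (b - a))).toReal)
    (ε : ℝ) (hε : 0 < ε) :
    ((c / ‖b - a‖ ^ 2) • j) ∈ relRegSub ε (segment ℝ a b) f (a + t₀ • (b - a)) := by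
  have he : b - a ≠ 0 := sub_ne_zero.mpr (Ne.symm hab)
  have hne : (0:ℝ) < ‖b - a‖ := norm_pos_iff.mpr he
  have hne2 : (0:ℝ) < ‖b - a‖ ^ 2 := pow_pos hne 2
  have hmem : ∀ t ∈ Icc (0:ℝ) 1, a + t • (b - a) ∈ segment ℝ a b := by
    intro t ht
    rw [segment_eq_image']
    exact ⟨t, ht, rfl⟩
  have ht₀Icc : t₀ ∈ Icc (0:ℝ) 1 := ⟨ht₀.1.le, ht₀.2.le⟩
  have hxbar : a + t₀ • (b - a) ∈ segment ℝ a b := hmem t₀ ht₀Icc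
  constructor
  · -- geomSub part
    refine ⟨(f (a + t₀ • (b - a))).toReal, ?_, ?_⟩
    · simp only [restr, if_pos hxbar]
      exact (hfin t₀ ht₀Icc).symm ▸ rfl
    · simp only [eNormalProd, mem_setOf_eq]
      rw [Filter.limsup_eq]
      apply sInf_le
      simp only [mem_setOf_eq]
      -- eventual bound
      obtain ⟨δ, hδ, hH⟩ := Metric.eventually_nhds_iff.mp (H (ε * ‖b - a‖) (by positivity))
      have hVopen : IsOpen {z : X × ℝ | ‖z.1 - (a + t₀ • (b - a))‖ < δ * ‖b - a‖} :=
        isOpen_lt (by fun_prop) continuous_const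
      have hVmem : ((a + t₀ • (b - a)), (f (a + t₀ • (b - a))).toReal) ∈
          {z : X × ℝ | ‖z.1 - (a + t₀ • (b - a))‖ < δ * ‖b - a‖} := by
        simp only [mem_setOf_eq, sub_self, norm_zero]
        positivity
      filter_upwards [mem_nhdsWithin_of_mem_nhds (hVopen.mem_nhds hVmem),
        self_mem_nhdsWithin] with z hzV hzepi
      simp only [epiSet, mem_setOf_eq] at hzepi
      -- z.1 is on the segment
      have hz1 : z.1 ∈ segment ℝ a b := by
        by_contra hz1
        rw [restr, if_neg hz1] at hzepi
        rw [top_le_iff] at hzepi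
        exact EReal.coe_ne_top z.2 hzepi
      rw [restr, if_pos hz1] at hzepi
      obtain ⟨t', ht'Icc, ht'⟩ := by
        rw [segment_eq_image'] at hz1; exact hz1
      have ht'' : a + t' • (b - a) = z.1 := ht'
      have hzsub : z.1 - (a + t₀ • (b - a)) = (t' - t₀) • (b - a) := by
        rw [← ht'', sub_smul]; abel
      have hznorm : ‖z.1 - (a + t₀ • (b - a))‖ = |t' - t₀| * ‖b - a‖ := by
        rw [hzsub, norm_smul, Real.norm_eq_abs]
      have ht'δ : |t' - t₀| < δ := by
        have := hzV
        simp only [mem_setOf_eq, hznorm] at this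
        exact lt_of_mul_lt_mul_right this hne.le
      have hineq : (f (a + t₀ • (b - a))).toReal + c * (t' - t₀)
          - ε * ‖b - a‖ * |t' - t₀| ≤ (f (a + t' • (b - a))).toReal := by
        have := hH (y := t') (by simpa [Real.dist_eq] using ht'δ) ht'Icc
        linarith
      have hz2 : (f (a + t' • (b - a))).toReal ≤ z.2 := by
        rw [← ht''] at hzepi
        rw [hfin t' ht'Icc] at hzepi
        exact_mod_cast hzepi
      -- compute the functional value
      have happ : ((c / ‖b - a‖ ^ 2) • j) (z.1 - (a + t₀ • (b - a))) = c * (t' - t₀) := by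
        rw [hzsub]
        simp only [ContinuousLinearMap.coe_smul', Pi.smul_apply, map_smul, hje, smul_eq_mul]
        field_simp
      set r := (f (a + t₀ • (b - a))).toReal with hr
      set N := ((c / ‖b - a‖ ^ 2) • j) (z.1 - (a + t₀ • (b - a))) + (-1 : ℝ) * (z.2 - r) with hN
      set D := ‖z.1 - (a + t₀ • (b - a))‖ + |z.2 - r| with hD
      have hDnn : 0 ≤ D := by rw [hD]; positivity
      have hNle : N ≤ ε * D := by
        rw [hN, hD, happ, hznorm]
        have h1 : 0 ≤ ε * |z.2 - r| := by positivity
        have h2 : (f (a + t' • (b - a))).toReal ≤ z.2 := hz2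
        nlinarith [hineq]
      show (((N / D : ℝ)) : EReal) ≤ (ε : EReal)
      rw [EReal.coe_le_coe_iff]
      rcases eq_or_lt_of_le hDnn with hD0 | hD0
      · rw [← hD0, div_zero]; exact hε.le
      · rw [div_le_iff₀ hD0]; linarith [hNle]
  · -- duality map part
    simp only [dualityMapSet, mem_iUnion]
    refine ⟨(c / ‖b - a‖ ^ 2) • (b - a), ?_, ?_, ?_⟩
    · -- tangent cone membership
      obtain ⟨δ₀, hδ₀def⟩ : ∃ δ₀ : ℝ, δ₀ = min t₀ (1 - t₀) / (|c / ‖b - a‖ ^ 2| + 1) := ⟨_, rfl⟩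
      have hmin : 0 < min t₀ (1 - t₀) := lt_min ht₀.1 (by linarith [ht₀.2])
      have hδ₀ : 0 < δ₀ := by rw [hδ₀def]; positivity
      refine ⟨fun k => δ₀ / (k + 1), fun _ => (c / ‖b - a‖ ^ 2) • (b - a), ?_, ?_, ?_, ?_⟩
      · intro k; positivity
      · have h1 : Filter.Tendsto (fun k : ℕ => δ₀ * (1 / (k + 1))) atTop (nhds (δ₀ * 0)) :=
          tendsto_one_div_add_atTop_nhds_zero_nat.const_mul δ₀
        simpa [mul_one_div, div_eq_mul_inv] using h1
      · exact tendsto_const_nhds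
      · intro k
        have key : a + t₀ • (b - a) + (δ₀ / (k + 1)) • ((c / ‖b - a‖ ^ 2) • (b - a))
            = a + (t₀ + δ₀ / (k + 1) * (c / ‖b - a‖ ^ 2)) • (b - a) := by
          rw [smul_smul, add_smul]; abel
        rw [key]
        apply hmem
        have hb1 : |δ₀ / (k + 1) * (c / ‖b - a‖ ^ 2)| ≤ min t₀ (1 - t₀) := by
          rw [abs_mul]
          have hk : |δ₀ / (k + 1 : ℝ)| ≤ δ₀ := by
            rw [abs_of_pos (by positivity)]
            rw [div_le_iff₀ (by positivity)]
            nlinarith [hδ₀]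
          have h2 : |δ₀ / (k+1:ℝ)| * |c / ‖b - a‖ ^ 2| ≤ δ₀ * (|c / ‖b - a‖ ^ 2| + 1) := by
            apply mul_le_mul hk (by linarith [abs_nonneg (c / ‖b - a‖ ^ 2)])
              (abs_nonneg _) hδ₀.le
          have h3 : δ₀ * (|c / ‖b - a‖ ^ 2| + 1) = min t₀ (1 - t₀) := by
            rw [hδ₀def]; field_simp
          linarith
        have h4 := abs_le.mp hb1
        constructor
        · have := min_le_left t₀ (1 - t₀); linarith [h4.1]
        · have := min_le_right t₀ (1 - t₀); linarith [h4.2]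
    · -- xs v = ‖v‖²
      simp only [ContinuousLinearMap.coe_smul', Pi.smul_apply, map_smul, hje, smul_eq_mul,
        norm_smul, Real.norm_eq_abs]
      rw [mul_pow, sq_abs]
      field_simp
    · -- xs v = ‖xs‖²
      simp only [ContinuousLinearMap.coe_smul', Pi.smul_apply, map_smul, hje, smul_eq_mul]
      rw [norm_smul (c / ‖b - a‖ ^ 2) j, Real.norm_eq_abs, hjn, mul_pow, sq_abs]
      field_simp


lemma mem_relLimSub_of_localSubgrad
    (a b : X) (hab : a ≠ b) (f : X → EReal)
    (hfin : ∀ t ∈ Icc (0:ℝ) 1, f (a + t • (b - a)) = (((f (a + t • (b - a))).toReal : ℝ) : EReal))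
    (j : X →L[ℝ] ℝ) (hje : j (b - a) = ‖b - a‖ ^ 2) (hjn : ‖j‖ = ‖b - a‖)
    (t₀ : ℝ) (ht₀ : t₀ ∈ Ioo (0:ℝ) 1) (c : ℝ)
    (H : ∀ ε : ℝ, 0 < ε → ∀ᶠ t in 𝓝 t₀, t ∈ Icc (0:ℝ) 1 →
      (f (a + t₀ • (b - a))).toReal + c * (t - t₀) - ε * |t - t₀| ≤ (f (a + t • (b - a))).toReal) :
    ((c / ‖b - a‖ ^ 2) • j) ∈ relLimSub (segment ℝ a b) f (a + t₀ • (b - a)) := by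
  have hmem : a + t₀ • (b - a) ∈ segment ℝ a b := by
    rw [segment_eq_image']
    exact ⟨t₀, ⟨ht₀.1.le, ht₀.2.le⟩, rfl⟩
  refine ⟨fun k => 1 / (k + 1), fun _ => a + t₀ • (b - a), fun _ => (c / ‖b - a‖ ^ 2) • j,
    ?_, ?_, ?_, ?_, ?_, ?_, ?_, ?_⟩
  · intro k; positivity
  · intro m n h
    apply one_div_le_one_div_of_le (by positivity)
    have : (m : ℝ) ≤ (n : ℝ) := Nat.cast_le.mpr h
    linarith
  · exact tendsto_one_div_add_atTop_nhds_zero_nat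
  · intro k; exact hmem
  · exact tendsto_const_nhds
  · exact tendsto_const_nhds
  · intro k
    exact mem_relRegSub_of_localSubgrad a b hab f hfin j hje hjn t₀ ht₀ c H _ (by positivity)
  · intro v; exact tendsto_const_nhds

end LemA

set_option maxHeartbeats 2000000 in
/-- subgradient inequality from monotonicity. -/
theorem subgradient_inequality_of_monotone
    {X : Type*} [NormedAddCommGroup X] [NormedSpace ℝ X] [CompleteSpace X]
    (hX : StandingAssumptions X)
    (a b : X) (hab : a ≠ b)
    (f : X → EReal) (hproper : (∀ x, f x ≠ ⊥) ∧ ∃ x, f x ≠ ⊤)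
    (hdom : ∀ x ∈ segment ℝ a b, f x ≠ ⊤)
    (hcont : ContRelOn f (segment ℝ a b))
    (hlip : ∀ x ∈ segment ℝ a b, ∃ ℓ : ℝ, 0 ≤ ℓ ∧ LocLipRel f (segment ℝ a b) x ℓ)
    (hmono : MonotoneSV (relLimSub (segment ℝ a b) f)) :
    (∀ u ∈ segment ℝ a b, ∀ us ∈ relLimSub (segment ℝ a b) f u,
      ∀ x ∈ segment ℝ a b, ((us (x - u) : ℝ) : EReal) ≤ f x - f u) ∧
    ConvexOnSet f (segment ℝ a b) := by
  have he : b - a ≠ 0 := sub_ne_zero.mpr (Ne.symm hab)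
  have hne : (0:ℝ) < ‖b - a‖ := norm_pos_iff.mpr he
  have hne2 : (0:ℝ) < ‖b - a‖ ^ 2 := pow_pos hne 2
  -- the duality functional
  obtain ⟨j₀, hj₀n, hj₀e⟩ := exists_dual_vector ℝ (b - a) hne.ne'
  obtain ⟨j, hjdef⟩ : ∃ j : X →L[ℝ] ℝ, j = ‖b - a‖ • j₀ := ⟨_, rfl⟩
  have hje : j (b - a) = ‖b - a‖ ^ 2 := by
    rw [hjdef]
    simp only [ContinuousLinearMap.coe_smul', Pi.smul_apply, smul_eq_mul]
    have : j₀ (b - a) = ‖b - a‖ := by exact_mod_cast hj₀e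
    rw [this]; ring
  have hjn : ‖j‖ = ‖b - a‖ := by
    rw [hjdef, norm_smul ‖b - a‖ j₀, Real.norm_eq_abs, abs_of_pos hne, hj₀n, mul_one]
  have hmem : ∀ t ∈ Icc (0:ℝ) 1, a + t • (b - a) ∈ segment ℝ a b := by
    intro t ht; rw [segment_eq_image']; exact ⟨t, ht, rfl⟩
  have hparam : ∀ x ∈ segment ℝ a b, ∃ t ∈ Icc (0:ℝ) 1, a + t • (b - a) = x := by
    intro x hx; rw [segment_eq_image'] at hx
    obtain ⟨t, ht, h⟩ := hx; exact ⟨t, ht, h⟩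
  have hfin : ∀ t ∈ Icc (0:ℝ) 1,
      f (a + t • (b - a)) = (((f (a + t • (b - a))).toReal : ℝ) : EReal) :=
    fun t ht => (EReal.coe_toReal (hdom _ (hmem t ht)) (hproper.1 _)).symm
  obtain ⟨g, hgdef⟩ : ∃ g : ℝ → ℝ, g = fun t => (f (a + t • (b - a))).toReal := ⟨_, rfl⟩
  have hgeval : ∀ t, g t = (f (a + t • (b - a))).toReal := fun t => by rw [hgdef]
  -- continuity of g on [0,1]
  have hgc : ContinuousOn g (Icc (0:ℝ) 1) := by
    intro t ht
    have h1 : ContinuousWithinAt (fun s : ℝ => a + s • (b - a)) (Icc (0:ℝ) 1) t :=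
      (continuous_const.add (continuous_id'.smul continuous_const)).continuousWithinAt
    have hmt : MapsTo (fun s : ℝ => a + s • (b - a)) (Icc (0:ℝ) 1) (segment ℝ a b) :=
      fun s hs => hmem s hs
    have h2 : Tendsto f (nhdsWithin (a + t • (b - a)) (segment ℝ a b))
        (nhds (f (a + t • (b - a)))) := hcont.2 _ (hmem t ht)
    have h3 := h2.comp (h1.tendsto_nhdsWithin hmt)
    have h4 := (EReal.tendsto_toReal (hdom _ (hmem t ht)) (hproper.1 _)).comp h3
    rw [hgdef]
    exact h4
  -- membership machine
  have KEY : ∀ t₀ ∈ Ioo (0:ℝ) 1, ∀ c : ℝ,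
      (∀ ε : ℝ, 0 < ε → ∀ᶠ t in 𝓝 t₀, g t₀ + c * (t - t₀) - ε * |t - t₀| ≤ g t) →
      ((c / ‖b - a‖ ^ 2) • j) ∈ relLimSub (segment ℝ a b) f (a + t₀ • (b - a)) := by
    intro t₀ ht₀ c H
    apply mem_relLimSub_of_localSubgrad a b hab f hfin j hje hjn t₀ ht₀ c
    intro ε hε
    filter_upwards [H ε hε] with t hineq _
    rw [hgeval, hgeval] at hineq
    exact hineq
  -- monotonicity consequences
  have pairKey : ∀ t₁ t₂ c₁ c₂ : ℝ, t₁ ∈ Ioo (0:ℝ) 1 → t₂ ∈ Ioo (0:ℝ) 1 →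
      ((c₁ / ‖b - a‖ ^ 2) • j) ∈ relLimSub (segment ℝ a b) f (a + t₁ • (b - a)) →
      ((c₂ / ‖b - a‖ ^ 2) • j) ∈ relLimSub (segment ℝ a b) f (a + t₂ • (b - a)) →
      0 ≤ (c₁ - c₂) * (t₁ - t₂) := by
    intro t₁ t₂ c₁ c₂ _ _ h₁ h₂
    have h0 := hmono _ _ _ _ h₁ h₂
    have hsub : (a + t₁ • (b - a)) - (a + t₂ • (b - a)) = (t₁ - t₂) • (b - a) := by
      rw [sub_smul]; abel
    rw [hsub] at h0
    simp only [ContinuousLinearMap.sub_apply, ContinuousLinearMap.coe_smul', Pi.smul_apply,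
      map_smul, hje, smul_eq_mul] at h0
    rw [div_mul_cancel₀ c₁ (ne_of_gt hne2), div_mul_cancel₀ c₂ (ne_of_gt hne2)] at h0
    nlinarith [h0]
  have usKey : ∀ τ : ℝ, ∀ us : X →L[ℝ] ℝ,
      us ∈ relLimSub (segment ℝ a b) f (a + τ • (b - a)) →
      ∀ t ∈ Ioo (0:ℝ) 1, ∀ c : ℝ,
      ((c / ‖b - a‖ ^ 2) • j) ∈ relLimSub (segment ℝ a b) f (a + t • (b - a)) →
      0 ≤ (us (b - a) - c) * (τ - t) := by
    intro τ us hus t ht c hc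
    have h0 := hmono _ _ _ _ hus hc
    have hsub : (a + τ • (b - a)) - (a + t • (b - a)) = (τ - t) • (b - a) := by
      rw [sub_smul]; abel
    rw [hsub] at h0
    simp only [ContinuousLinearMap.sub_apply, ContinuousLinearMap.coe_smul', Pi.smul_apply,
      map_smul, hje, smul_eq_mul] at h0
    rw [div_mul_cancel₀ c (ne_of_gt hne2)] at h0
    nlinarith [h0]
  -- Part 1
  have part1 : ∀ u ∈ segment ℝ a b, ∀ us ∈ relLimSub (segment ℝ a b) f u,
      ∀ x ∈ segment ℝ a b, ((us (x - u) : ℝ) : EReal) ≤ f x - f u := by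
    intro u hu us hus x hx
    obtain ⟨τ, hτ, hτeq⟩ := hparam u hu
    obtain ⟨σ, hσ, hσeq⟩ := hparam x hx
    have hxu : x - u = (σ - τ) • (b - a) := by
      rw [← hτeq, ← hσeq, sub_smul]; abel
    have husv : us (x - u) = (σ - τ) * us (b - a) := by
      rw [hxu, map_smul, smul_eq_mul]
    have hfx : f x = ((g σ : ℝ) : EReal) := by
      rw [← hσeq, hgeval]; exact hfin σ hσ
    have hfu : f u = ((g τ : ℝ) : EReal) := by
      rw [← hτeq, hgeval]; exact hfin τ hτ
    rw [hfx, hfu, ← EReal.coe_sub, husv, EReal.coe_le_coe_iff]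
    by_contra hcon
    push_neg at hcon
    rcases lt_trichotomy τ σ with hlt | heq | hgt
    · -- τ < σ
      have hblt : g σ - g τ < us (b - a) * (σ - τ) := by nlinarith
      obtain ⟨t₀, ht₀, c'', hc'', hev⟩ :=
        barrier_lemma hlt (hgc.mono (Icc_subset_Icc hτ.1 hσ.2)) hblt
      have ht₀01 : t₀ ∈ Ioo (0:ℝ) 1 :=
        ⟨lt_of_le_of_lt hτ.1 ht₀.1, lt_of_lt_of_le ht₀.2 hσ.2⟩
      have hmem' := KEY t₀ ht₀01 c'' hev
      have := usKey τ us (by rw [hτeq]; exact hus) t₀ ht₀01 c'' hmem'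
      nlinarith [ht₀.1]
    · -- τ = σ
      rw [heq] at hcon; simp at hcon
    · -- σ < τ
      have hbgt : us (b - a) * (τ - σ) < g τ - g σ := by nlinarith
      obtain ⟨t₀, ht₀, c'', hc'', hev⟩ :=
        barrier_lemma' hgt (hgc.mono (Icc_subset_Icc hσ.1 hτ.2)) hbgt
      have ht₀01 : t₀ ∈ Ioo (0:ℝ) 1 :=
        ⟨lt_of_le_of_lt hσ.1 ht₀.1, lt_of_lt_of_le ht₀.2 hτ.2⟩
      have hmem' := KEY t₀ ht₀01 c'' hev
      have := usKey τ us (by rw [hτeq]; exact hus) t₀ ht₀01 c'' hmem'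
      nlinarith [ht₀.2, hc'']
  refine ⟨part1, ?_⟩
  -- slope inequality
  have slope : ∀ s m tt : ℝ, 0 ≤ s → tt ≤ 1 → s < m → m < tt →
      (g m - g s) * (tt - m) ≤ (g tt - g m) * (m - s) := by
    intro s m tt hs0 htt1 hsm hmtt
    by_contra hcon
    push_neg at hcon
    have hms : 0 < m - s := by linarith
    have httm : 0 < tt - m := by linarith
    obtain ⟨c, hcdef⟩ : ∃ c : ℝ, c = ((g m - g s) / (m - s) + (g tt - g m) / (tt - m)) / 2 :=
      ⟨_, rfl⟩
    have hd1 : (g tt - g m) / (tt - m) < (g m - g s) / (m - s) :=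
      (div_lt_div_iff₀ httm hms).mpr hcon
    have hc1 : (g tt - g m) / (tt - m) < c := by rw [hcdef]; linarith
    have hc2 : c < (g m - g s) / (m - s) := by rw [hcdef]; linarith
    have hA : g tt - g m < c * (tt - m) := by
      have := (div_lt_iff₀ httm).mp hc1; linarith
    have hB : c * (m - s) < g m - g s := by
      have := (lt_div_iff₀ hms).mp hc2; linarith
    obtain ⟨t₁, ht₁, c₁, hc₁, hev₁⟩ :=
      barrier_lemma hmtt (hgc.mono (Icc_subset_Icc (by linarith) htt1)) hA
    obtain ⟨t₂, ht₂, c₂, hc₂, hev₂⟩ :=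
      barrier_lemma' hsm (hgc.mono (Icc_subset_Icc hs0 (by linarith))) hB
    have ht₁01 : t₁ ∈ Ioo (0:ℝ) 1 := ⟨by linarith [ht₁.1], by linarith [ht₁.2]⟩
    have ht₂01 : t₂ ∈ Ioo (0:ℝ) 1 := ⟨by linarith [ht₂.1], by linarith [ht₂.2]⟩
    have hmem₁ := KEY t₁ ht₁01 c₁ hev₁
    have hmem₂ := KEY t₂ ht₂01 c₂ hev₂
    have hpair := pairKey t₁ t₂ c₁ c₂ ht₁01 ht₂01 hmem₁ hmem₂
    have ht12 : t₂ < t₁ := by linarith [ht₁.1, ht₂.2]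
    nlinarith [hc₂]
  -- convexity
  intro x hx y hy t ht0 ht1
  obtain ⟨p, hp, hpeq⟩ := hparam x hx
  obtain ⟨q, hq, hqeq⟩ := hparam y hy
  have hzeq : t • x + (1 - t) • y = a + (t * p + (1 - t) * q) • (b - a) := by
    rw [← hpeq, ← hqeq]
    module
  have hm01 : t * p + (1 - t) * q ∈ Icc (0:ℝ) 1 := by
    constructor
    · have := hp.1; have := hq.1; nlinarith
    · have := hp.2; have := hq.2; nlinarith
  have hfz : f (t • x + (1 - t) • y) = ((g (t * p + (1 - t) * q) : ℝ) : EReal) := by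
    rw [hzeq, hgeval]; exact hfin _ hm01
  have hfx : f x = ((g p : ℝ) : EReal) := by rw [← hpeq, hgeval]; exact hfin p hp
  have hfy : f y = ((g q : ℝ) : EReal) := by rw [← hqeq, hgeval]; exact hfin q hq
  rw [hfz, hfx, hfy, ← EReal.coe_mul, ← EReal.coe_mul, ← EReal.coe_add, EReal.coe_le_coe_iff]
  -- now a real inequality
  rcases eq_or_lt_of_le ht0 with h0 | h0
  · rw [← h0]
    have harg : (0:ℝ) * p + (1 - 0) * q = q := by ring
    rw [harg]; ring_nf; exact le_refl _
  rcases eq_or_lt_of_le ht1 with h1 | h1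
  · rw [h1]
    have harg : (1:ℝ) * p + (1 - 1) * q = p := by ring
    rw [harg]; ring_nf; exact le_refl _
  rcases lt_trichotomy p q with hpq | hpq | hpq
  · have hsm : p < t * p + (1 - t) * q := by nlinarith
    have hmtt : t * p + (1 - t) * q < q := by nlinarith
    have := slope p (t * p + (1 - t) * q) q hp.1 hq.2 hsm hmtt
    nlinarith
  · rw [← hpq]
    have harg : t * p + (1 - t) * p = p := by ring
    rw [harg]
    have : t * g p + (1 - t) * g p = g p := by ring
    linarith
  · have hsm : q < t * p + (1 - t) * q := by nlinarith
    have hmtt : t * p + (1 - t) * q < p := by nlinarith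
    have := slope q (t * p + (1 - t) * q) p hq.1 hp.2 hsm hmtt
    nlinarith
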